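/- For every integer n ≥ 2 there are ring isomorphisms ℤ[x_1,…,x_n]/(h_1^n,…,h_n^n) ≅ ℤ[x_1,…,x_{n−1}]/(h_2^{n−1},…,h_n^{n−1}) ≅ ℤ[x_1,…,x_{n−1}]/(h_2^{n−1}, h_3^{n−2}, …, h_n^{1}), where the first isomorphism is induced by sending x_n to −x_1−⋯−x_{n−1}. -/

import Mathlib

open MvPolynomial

/-- `hpoly n a b` is the sum of all monomials of degree `a` in the first `b`
variables `x_1, …, x_b` of `ℤ[x_1,…,x_n]`: the complete homogeneous symmetric
polynomial `h_a^b`. -/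
noncomputable def hpoly (n a b : ℕ) : MvPolynomial (Fin n) ℤ :=
  ∑ μ ∈ Finset.univ.filter (fun μ : Sym (Fin n) a => ∀ i ∈ μ.1, (i : ℕ) < b),
    (μ.1.map X).prod

lemma hpoly_zero (n b : ℕ) : hpoly n 0 b = 1 := by
  simp [hpoly, Sym.eq_nil_of_card_zero]

lemma hpoly_succ_zero (n a : ℕ) : hpoly n (a+1) 0 = 0 := by
  rw [hpoly, Finset.sum_eq_zero]
  intro μ hμ
  simp only [Finset.mem_filter] at hμ
  obtain ⟨i, hi⟩ := Multiset.exists_mem_of_ne_zero (s := μ.1) (by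
    intro h; have := μ.2; rw [h] at this; simp at this)
  exact absurd (hμ.2 i hi) (by omega)

lemma hpoly_rec (n a b : ℕ) (hb : b < n) :
    hpoly n (a+1) (b+1)
      = hpoly n (a+1) b + X (⟨b, hb⟩ : Fin n) * hpoly n a (b+1) := by
  classical
  set c : Fin n := ⟨b, hb⟩ with hc
  have hsplit :
      hpoly n (a+1) (b+1)
        = (∑ μ ∈ (Finset.univ.filter
            (fun μ : Sym (Fin n) (a+1) => (∀ i ∈ μ.1, (i : ℕ) < b+1) ∧ c ∉ μ)),
            (μ.1.map X).prod)
          + (∑ μ ∈ (Finset.univ.filter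
            (fun μ : Sym (Fin n) (a+1) => (∀ i ∈ μ.1, (i : ℕ) < b+1) ∧ c ∈ μ)),
            (μ.1.map X).prod) := by
    rw [hpoly, ← Finset.sum_filter_add_sum_filter_not _ (fun μ : Sym (Fin n) (a+1) => c ∈ μ),
      Finset.filter_filter, Finset.filter_filter, add_comm]
  rw [hsplit]
  congr 1
  · rw [hpoly]
    apply Finset.sum_congr _ (fun _ _ => rfl)
    apply Finset.filter_congr
    intro μ _
    constructor
    · rintro ⟨h1, h2⟩ i hi
      have hne : i ≠ c := fun h => h2 (h ▸ hi)
      have h3 := h1 i hi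
      have : (i : ℕ) ≠ b := fun h => hne (Fin.ext h)
      omega
    · intro h
      refine ⟨fun i hi => by have := h i hi; omega, fun hcμ => ?_⟩
      have := h c hcμ
      simp only [hc] at this
      omega
  · rw [hpoly, Finset.mul_sum]
    refine Finset.sum_bij'
      (i := fun μ (hμ : μ ∈ _) => Sym.erase μ c (by
        simp only [Finset.mem_filter] at hμ; exact hμ.2.2))
      (j := fun ν _ => c ::ₛ ν)
      (hi := ?_) (hj := ?_) (left_neg := ?_) (right_neg := ?_) (h := ?_)
    · intro μ hμ
      simp only [Finset.mem_filter] at hμ ⊢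
      refine ⟨Finset.mem_univ _, fun i hi => ?_⟩
      exact hμ.2.1 i (Multiset.mem_of_mem_erase hi)
    · intro ν hν
      simp only [Finset.mem_filter] at hν ⊢
      refine ⟨Finset.mem_univ _, fun i hi => ?_, Sym.mem_cons_self _ _⟩
      rcases Multiset.mem_cons.1 hi with h | h
      · subst h; simp [hc]
      · exact hν.2 i h
    · intro μ hμ
      exact Sym.cons_erase _
    · intro ν hν
      exact Sym.erase_cons_head _ _
    · intro μ hμ
      simp only [Finset.mem_filter] at hμ
      conv_lhs => rw [← Sym.cons_erase hμ.2.2]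
      simp [Sym.cons]

lemma hpoly_one (n b : ℕ) (hb : b ≤ n) :
    hpoly n 1 b = ∑ i ∈ Finset.univ.filter (fun i : Fin n => (i : ℕ) < b), X i := by
  induction b with
  | zero => simpa using hpoly_succ_zero n 0
  | succ b ih =>
    have hbn : b < n := hb
    rw [hpoly_rec n 0 b hbn, hpoly_zero, mul_one, ih (le_of_lt hbn)]
    have : Finset.univ.filter (fun i : Fin n => (i : ℕ) < b + 1)
        = insert (⟨b, hbn⟩ : Fin n) (Finset.univ.filter (fun i : Fin n => (i : ℕ) < b)) := by
      ext i
      simp only [Finset.mem_filter, Finset.mem_insert, Finset.mem_univ, true_and]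
      constructor
      · intro h
        rcases Nat.lt_succ_iff_lt_or_eq.1 h with h | h
        · exact Or.inr h
        · exact Or.inl (Fin.ext h)
      · rintro (rfl | h)
        · simp
        · omega
    rw [this, Finset.sum_insert (by simp), add_comm]

lemma hpoly_one_self (n : ℕ) : hpoly n 1 n = ∑ i : Fin n, X i := by
  rw [hpoly_one n n le_rfl]
  congr 1
  apply Finset.filter_true_of_mem
  intro i _
  exact i.isLt

noncomputable def phiF (m : ℕ) :
    MvPolynomial (Fin (m+2)) ℤ →+* MvPolynomial (Fin (m+1)) ℤ :=
  eval₂Hom C (fun i : Fin (m+2) =>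
    if h : (i : ℕ) < m+1 then X (⟨i, h⟩ : Fin (m+1)) else - ∑ j : Fin (m+1), X j)

noncomputable def psiF (m : ℕ) :
    MvPolynomial (Fin (m+1)) ℤ →+* MvPolynomial (Fin (m+2)) ℤ :=
  eval₂Hom C (fun j : Fin (m+1) => X (Fin.castSucc j))

lemma phiF_X_lt (m : ℕ) (i : Fin (m+2)) (h : (i : ℕ) < m+1) :
    phiF m (X i) = X (⟨i, h⟩ : Fin (m+1)) := by
  simp [phiF, Nat.lt_succ_iff.mp h]

lemma phiF_X_last (m : ℕ) (i : Fin (m+2)) (h : ¬ (i : ℕ) < m+1) :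
    phiF m (X i) = - ∑ j : Fin (m+1), X j := by
  simp [phiF, show ¬ (i : ℕ) ≤ m by omega]

lemma psiF_X (m : ℕ) (j : Fin (m+1)) : psiF m (X j) = X (Fin.castSucc j) := by
  simp [psiF]

lemma phiF_hpoly (m : ℕ) :
    ∀ a b, b ≤ m + 1 → phiF m (hpoly (m+2) a b) = hpoly (m+1) a b := by
  intro a
  induction a with
  | zero => intro b _; rw [hpoly_zero, hpoly_zero, map_one]
  | succ a ih =>
    intro b
    induction b with
    | zero => intro _; rw [hpoly_succ_zero, hpoly_succ_zero, map_zero]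
    | succ b ihb =>
      intro hb
      have hb2 : b < m + 2 := by omega
      have hb1 : b < m + 1 := by omega
      rw [hpoly_rec (m+2) a b hb2, hpoly_rec (m+1) a b hb1, map_add, map_mul,
        ihb (by omega), ih (b+1) hb, phiF_X_lt m _ (by simpa using hb1)]

lemma psiF_hpoly (m : ℕ) :
    ∀ a b, b ≤ m + 1 → psiF m (hpoly (m+1) a b) = hpoly (m+2) a b := by
  intro a
  induction a with
  | zero => intro b _; rw [hpoly_zero, hpoly_zero, map_one]
  | succ a ih =>
    intro b
    induction b with
    | zero => intro _; rw [hpoly_succ_zero, hpoly_succ_zero, map_zero]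
    | succ b ihb =>
      intro hb
      have hb2 : b < m + 2 := by omega
      have hb1 : b < m + 1 := by omega
      rw [hpoly_rec (m+1) a b hb1, hpoly_rec (m+2) a b hb2, map_add, map_mul,
        ihb (by omega), ih (b+1) hb, psiF_X]
      rfl

lemma phiF_h_mem_J (m : ℕ) : ∀ a, a + 1 ≤ m + 2 →
    phiF m (hpoly (m+2) (a+1) (m+2)) ∈
      Ideal.span ((fun a => hpoly (m+1) a (m+1)) '' Set.Icc 2 (m+2)) := by
  intro a
  induction a with
  | zero =>
    intro _
    have h1 : hpoly (m+2) 1 (m+2) = hpoly (m+2) 1 (m+1)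
        + X (⟨m+1, by omega⟩ : Fin (m+2)) * hpoly (m+2) 0 (m+2) :=
      hpoly_rec (m+2) 0 (m+1) (by omega)
    rw [h1, map_add, map_mul, hpoly_zero, map_one, mul_one,
      phiF_hpoly m 1 (m+1) le_rfl, phiF_X_last m _ (by simp),
      hpoly_one_self (m+1)]
    simp
  | succ a ih =>
    intro ha
    have h1 : hpoly (m+2) (a+2) (m+2) = hpoly (m+2) (a+2) (m+1)
        + X (⟨m+1, by omega⟩ : Fin (m+2)) * hpoly (m+2) (a+1) (m+2) :=
      hpoly_rec (m+2) (a+1) (m+1) (by omega)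
    rw [h1, map_add, map_mul]
    refine Ideal.add_mem _ ?_ (Ideal.mul_mem_left _ _ (ih (by omega)))
    rw [phiF_hpoly m (a+2) (m+1) le_rfl]
    exact Ideal.subset_span ⟨a+2, Set.mem_Icc.2 ⟨by omega, by omega⟩, rfl⟩

lemma psiF_h_mem_I (m : ℕ) : ∀ k, 2 ≤ k → k ≤ m + 2 →
    psiF m (hpoly (m+1) k (m+1)) ∈
      Ideal.span ((fun a => hpoly (m+2) a (m+2)) '' Set.Icc 1 (m+2)) := by
  intro k hk2 hkn
  obtain ⟨k', rfl⟩ : ∃ k', k = k' + 1 := ⟨k - 1, by omega⟩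
  rw [psiF_hpoly m (k'+1) (m+1) le_rfl]
  have h1 := hpoly_rec (m+2) k' (m+1) (by omega)
  have h2 : hpoly (m+2) (k'+1) (m+1)
      = hpoly (m+2) (k'+1) ((m+1)+1)
        - X (⟨m+1, by omega⟩ : Fin (m+2)) * hpoly (m+2) k' ((m+1)+1) := by
    rw [h1]; ring
  rw [h2]
  refine Ideal.sub_mem _ ?_ (Ideal.mul_mem_left _ _ ?_)
  · exact Ideal.subset_span ⟨k'+1, Set.mem_Icc.2 ⟨by omega, by omega⟩, rfl⟩
  · exact Ideal.subset_span ⟨k', Set.mem_Icc.2 ⟨by omega, by omega⟩, rfl⟩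

lemma hpoly_mem_K (m : ℕ) : ∀ s a b, a + b ≤ s → 2 ≤ a → a ≤ m + 2 →
    m + 2 - a + 1 ≤ b → b ≤ m + 1 →
    hpoly (m+1) a b ∈
      Ideal.span ((fun a => hpoly (m+1) a (m + 2 - a + 1)) '' Set.Icc 2 (m+2)) := by
  intro s
  induction s with
  | zero => intro a b h ha2 _ _ _; omega
  | succ s ih =>
    intro a b hs ha2 han hb1 hb2
    rcases eq_or_lt_of_le hb1 with heq | hlt
    · exact Ideal.subset_span ⟨a, Set.mem_Icc.2 ⟨ha2, han⟩, by rw [← heq]⟩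
    · obtain ⟨b', rfl⟩ : ∃ b', b = b' + 1 := ⟨b - 1, by omega⟩
      obtain ⟨a', rfl⟩ : ∃ a', a = a' + 1 := ⟨a - 1, by omega⟩
      have ha3 : 2 ≤ a' := by omega
      rw [hpoly_rec (m+1) a' b' (by omega)]
      exact Ideal.add_mem _
        (ih (a'+1) b' (by omega) (by omega) (by omega) (by omega) (by omega))
        (Ideal.mul_mem_left _ _
          (ih a' (b'+1) (by omega) ha3 (by omega) (by omega) (by omega)))

lemma hpoly_mem_J (m : ℕ) : ∀ s a b, a + (m + 1 - b) ≤ s → 2 ≤ a → a ≤ m + 2 →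
    m + 2 - a + 1 ≤ b → b ≤ m + 1 →
    hpoly (m+1) a b ∈
      Ideal.span ((fun a => hpoly (m+1) a (m+1)) '' Set.Icc 2 (m+2)) := by
  intro s
  induction s with
  | zero => intro a b h ha2 _ _ _; omega
  | succ s ih =>
    intro a b hs ha2 han hb1 hb2
    rcases eq_or_lt_of_le hb2 with heq | hlt
    · exact Ideal.subset_span ⟨a, Set.mem_Icc.2 ⟨ha2, han⟩, by rw [heq]⟩
    · obtain ⟨a', rfl⟩ : ∃ a', a = a' + 1 := ⟨a - 1, by omega⟩
      have ha3 : 2 ≤ a' := by omega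
      have h1 := hpoly_rec (m+1) a' b hlt
      have h2 : hpoly (m+1) (a'+1) b
          = hpoly (m+1) (a'+1) (b+1)
            - X (⟨b, hlt⟩ : Fin (m+1)) * hpoly (m+1) a' (b+1) := by
        rw [h1]; ring
      rw [h2]
      exact Ideal.sub_mem _
        (ih (a'+1) (b+1) (by omega) (by omega) (by omega) (by omega) (by omega))
        (Ideal.mul_mem_left _ _
          (ih a' (b+1) (by omega) ha3 (by omega) (by omega) (by omega)))

lemma J_eq_K (m : ℕ) :
    Ideal.span ((fun a => hpoly (m+1) a (m+1)) '' Set.Icc 2 (m+2))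
      = Ideal.span ((fun a => hpoly (m+1) a (m + 2 - a + 1)) '' Set.Icc 2 (m+2)) := by
  apply le_antisymm
  · rw [Ideal.span_le]
    rintro x ⟨a, ha, rfl⟩
    simp only [Set.mem_Icc] at ha
    simp only [SetLike.mem_coe]
    exact hpoly_mem_K m (a + (m+1)) a (m+1) le_rfl ha.1 ha.2 (by omega) le_rfl
  · rw [Ideal.span_le]
    rintro x ⟨a, ha, rfl⟩
    simp only [Set.mem_Icc] at ha
    simp only [SetLike.mem_coe]
    exact hpoly_mem_J m (a + (m + 1 - (m + 2 - a + 1))) a (m + 2 - a + 1)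
      le_rfl ha.1 ha.2 le_rfl (by omega)

/-- For `n ≥ 2` there are ring isomorphisms
`ℤ[x_1,…,x_n]/(h_1^n,…,h_n^n) ≅ ℤ[x_1,…,x_{n−1}]/(h_2^{n−1},…,h_n^{n−1})
  ≅ ℤ[x_1,…,x_{n−1}]/(h_2^{n−1}, h_3^{n−2}, …, h_n^1)`,
the first induced by `x_n ↦ −x_1−⋯−x_{n−1}`. -/
theorem quotient_hsymm_iso_chain (n : ℕ) (hn : 2 ≤ n) :
    (∃ f : (MvPolynomial (Fin n) ℤ ⧸
              Ideal.span ((fun a => hpoly n a n) '' Set.Icc 1 n)) ≃+*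
           (MvPolynomial (Fin (n - 1)) ℤ ⧸
              Ideal.span ((fun a => hpoly (n - 1) a (n - 1)) '' Set.Icc 2 n)),
      ∀ p : MvPolynomial (Fin n) ℤ,
        f (Ideal.Quotient.mk _ p)
          = Ideal.Quotient.mk _
              (eval₂ C
                (fun i : Fin n =>
                  if h : (i : ℕ) < n - 1 then X (⟨i, h⟩ : Fin (n - 1))
                  else - ∑ j : Fin (n - 1), X j) p)) ∧
    Nonempty
      ((MvPolynomial (Fin (n - 1)) ℤ ⧸
          Ideal.span ((fun a => hpoly (n - 1) a (n - 1)) '' Set.Icc 2 n))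
        ≃+*
       (MvPolynomial (Fin (n - 1)) ℤ ⧸
          Ideal.span ((fun a => hpoly (n - 1) a (n - a + 1)) '' Set.Icc 2 n))) := by
  obtain ⟨m, rfl⟩ : ∃ m, n = m + 2 := ⟨n - 2, by omega⟩
  have hsub : m + 2 - 1 = m + 1 := rfl
  set I : Ideal (MvPolynomial (Fin (m+2)) ℤ) :=
    Ideal.span ((fun a => hpoly (m+2) a (m+2)) '' Set.Icc 1 (m+2)) with hI
  set J : Ideal (MvPolynomial (Fin (m+1)) ℤ) :=
    Ideal.span ((fun a => hpoly (m+1) a (m+1)) '' Set.Icc 2 (m+2)) with hJ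
  constructor
  · -- part 1
    have hIker : ∀ p ∈ I, ((Ideal.Quotient.mk J).comp (phiF m)) p = 0 := by
      intro p hp
      have hle : I ≤ RingHom.ker ((Ideal.Quotient.mk J).comp (phiF m)) := by
        rw [hI, Ideal.span_le]
        rintro x ⟨a, ha, rfl⟩
        simp only [Set.mem_Icc] at ha
        obtain ⟨a', rfl⟩ : ∃ a', a = a' + 1 := ⟨a - 1, by omega⟩
        simp only [SetLike.mem_coe, RingHom.mem_ker, RingHom.comp_apply,
          Ideal.Quotient.eq_zero_iff_mem]
        exact phiF_h_mem_J m a' (by omega)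
      exact hle hp
    have hJker : ∀ q ∈ J, ((Ideal.Quotient.mk I).comp (psiF m)) q = 0 := by
      intro q hq
      have hle : J ≤ RingHom.ker ((Ideal.Quotient.mk I).comp (psiF m)) := by
        rw [hJ, Ideal.span_le]
        rintro x ⟨a, ha, rfl⟩
        simp only [Set.mem_Icc] at ha
        simp only [SetLike.mem_coe, RingHom.mem_ker, RingHom.comp_apply,
          Ideal.Quotient.eq_zero_iff_mem]
        exact psiF_h_mem_I m a ha.1 ha.2
      exact hle hq
    set F := Ideal.Quotient.lift I ((Ideal.Quotient.mk J).comp (phiF m)) hIker with hF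
    set G := Ideal.Quotient.lift J ((Ideal.Quotient.mk I).comp (psiF m)) hJker with hG
    have hFmk : ∀ p, F (Ideal.Quotient.mk I p) = Ideal.Quotient.mk J (phiF m p) :=
      fun p => Ideal.Quotient.lift_mk _ _ _
    have hGmk : ∀ q, G (Ideal.Quotient.mk J q) = Ideal.Quotient.mk I (psiF m q) :=
      fun q => Ideal.Quotient.lift_mk _ _ _
    have hGF : ∀ x, G (F x) = x := by
      have key : (Ideal.Quotient.mk I).comp ((psiF m).comp (phiF m))
          = Ideal.Quotient.mk I := by
        apply MvPolynomial.ringHom_ext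
        · intro r
          simp [phiF, psiF]
        · intro i
          simp only [RingHom.comp_apply]
          by_cases h : (i : ℕ) < m + 1
          · rw [phiF_X_lt m i h, psiF_X]
            congr 1
          · rw [phiF_X_last m i h, map_neg, map_sum]
            have hi : i = Fin.last (m+1) := Fin.ext (by have := i.isLt; simp; omega)
            rw [Ideal.Quotient.mk_eq_mk_iff_sub_mem]
            have hgen : hpoly (m+2) 1 (m+2) ∈ I :=
              Ideal.subset_span ⟨1, Set.mem_Icc.2 ⟨le_rfl, by omega⟩, rfl⟩
            have hsum : - (∑ j : Fin (m+1), psiF m (X j)) - X i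
                = - hpoly (m+2) 1 (m+2) := by
              conv_rhs => rw [hpoly_one_self (m+2), Fin.sum_univ_castSucc]
              simp only [psiF_X]
              rw [hi]
              ring
            rw [hsum]
            exact neg_mem hgen
      intro x
      obtain ⟨p, rfl⟩ := Ideal.Quotient.mk_surjective x
      rw [hFmk, hGmk]
      exact RingHom.congr_fun key p
    have hFG : ∀ y, F (G y) = y := by
      have key : (phiF m).comp (psiF m) = RingHom.id _ := by
        apply MvPolynomial.ringHom_ext
        · intro r
          simp [phiF, psiF]
        · intro j
          simp only [RingHom.comp_apply, RingHom.id_apply, psiF_X]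
          rw [phiF_X_lt m _ (by simpa using j.isLt)]
          exact congrArg X (Fin.ext rfl)
      intro y
      obtain ⟨q, rfl⟩ := Ideal.Quotient.mk_surjective y
      rw [hGmk, hFmk]
      rw [show phiF m (psiF m q) = q from RingHom.congr_fun key q]
    refine ⟨{ toFun := F, invFun := G, left_inv := hGF, right_inv := hFG,
              map_mul' := map_mul F, map_add' := map_add F }, ?_⟩
    intro p
    exact hFmk p
  · -- part 2
    exact ⟨Ideal.quotientEquivAlgOfEq ℤ (J_eq_K m) |>.toRingEquiv⟩
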